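/- (Proposition 2(i).) Assume (1/n) M̃_nᵀ M̃_n converges in probability to H + σ_M² I, the deterministic matrices satisfy (1/n) D_n → 0, and U_n = 0 almost surely for every n (no unobserved confounder). Then the conditional bias of the BIMA estimator, B_n = (M̃_nᵀM̃_n + D_n)⁻¹ (M̃_nᵀ U_n − D_n θ⁰), converges in probability to 0. -/

import Mathlib

open MeasureTheory Matrix Filter Topology

lemma bima_entrywise_nhds {L : ℕ} (K₀ : Matrix (Fin L) (Fin L) ℝ)
    {V : Set (Matrix (Fin L) (Fin L) ℝ)} (hV : V ∈ nhds K₀) :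
    ∃ δ > 0, ∀ X : Matrix (Fin L) (Fin L) ℝ,
      (∀ l l', |X l l' - K₀ l l'| < δ) → X ∈ V := by
  have hcont : Continuous (Matrix.of : (Fin L → Fin L → ℝ) → Matrix (Fin L) (Fin L) ℝ) :=
    continuous_matrix fun i j => continuous_apply_apply i j
  have hV' : (Matrix.of : (Fin L → Fin L → ℝ) → _) ⁻¹' V ∈ nhds (fun l l' => K₀ l l') :=
    hcont.continuousAt.preimage_mem_nhds hV
  obtain ⟨δ, hδ, hball⟩ := Metric.mem_nhds_iff.mp hV'
  refine ⟨δ, hδ, fun X hX => ?_⟩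
  have hmem : (fun l l' => X l l') ∈ Metric.ball (fun l l' => K₀ l l') δ := by
    rw [Metric.mem_ball, dist_pi_lt_iff hδ]
    intro l
    rw [dist_pi_lt_iff hδ]
    intro l'
    rw [Real.dist_eq]
    exact hX l l'
  exact hball hmem

lemma bima_eq {L : ℕ} (θ0 : Fin L → ℝ) (X Dm : Matrix (Fin L) (Fin L) ℝ)
    {c : ℝ} (hc : c ≠ 0) :
    (X + Dm)⁻¹ *ᵥ ((0 : Fin L → ℝ) - Dm *ᵥ θ0)
      = -(((c • (X + Dm))⁻¹ * (c • Dm)) *ᵥ θ0) := by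
  have h1 : (X + Dm)⁻¹ *ᵥ ((0 : Fin L → ℝ) - Dm *ᵥ θ0)
      = -(((X + Dm)⁻¹ * Dm) *ᵥ θ0) := by
    rw [zero_sub, Matrix.mulVec_neg, Matrix.mulVec_mulVec]
  rw [h1]
  by_cases h : IsUnit (X + Dm).det
  · have hi : Invertible c := invertibleOfNonzero hc
    have h4 : (c • (X + Dm))⁻¹ = ⅟ c • (X + Dm)⁻¹ := Matrix.inv_smul (A := X + Dm) c h
    rw [h4, Matrix.smul_mul, Matrix.mul_smul, smul_smul, invOf_mul_self, one_smul]
  · have h2 : (X + Dm)⁻¹ = 0 := Matrix.nonsing_inv_apply_not_isUnit _ h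
    have h3 : (c • (X + Dm))⁻¹ = 0 := Matrix.nonsing_inv_apply_not_isUnit _ (by
      rw [Matrix.det_smul]
      exact fun hu => h (isUnit_of_mul_isUnit_right hu))
    rw [h2, h3]
    simp


theorem bima_asymptotic_bias_no_confounder
    {Ω : Type*} [MeasurableSpace Ω] (P : Measure Ω) [IsProbabilityMeasure P]
    {L : ℕ} (σM : ℝ) (hσM : 0 < σM)
    (H : Matrix (Fin L) (Fin L) ℝ) (hH : H.PosSemidef)
    (θ0 : Fin L → ℝ)
    (M : (n : ℕ) → Ω → Matrix (Fin n) (Fin L) ℝ)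
    (U : (n : ℕ) → Ω → Fin n → ℝ)
    (D : ℕ → Matrix (Fin L) (Fin L) ℝ) (hD : ∀ n, (D n).PosSemidef)
    (hMM : ∀ l l' : Fin L, TendstoInMeasure P
      (fun (n : ℕ) (ω : Ω) => (n : ℝ)⁻¹ * (((M n ω)ᵀ * M n ω) l l')) atTop
      (fun _ => (H + σM ^ 2 • (1 : Matrix (Fin L) (Fin L) ℝ)) l l'))
    (hDlim : Tendsto (fun n : ℕ => ((n : ℝ)⁻¹) • D n) atTop (nhds 0))
    (hU : ∀ n, ∀ᵐ ω ∂P, U n ω = 0) :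
    TendstoInMeasure P
      (fun (n : ℕ) (ω : Ω) =>
        ((M n ω)ᵀ * M n ω + D n)⁻¹ *ᵥ ((M n ω)ᵀ *ᵥ U n ω - (D n) *ᵥ θ0)) atTop
      (fun _ => (0 : Fin L → ℝ)) := by
  classical
  rw [tendstoInMeasure_iff_dist]
  intro ε hε
  set K : Matrix (Fin L) (Fin L) ℝ := H + σM ^ 2 • 1 with hKdef
  have hKpd : K.PosDef := Matrix.PosDef.posSemidef_add hH (by
    rw [Matrix.smul_one_eq_diagonal]
    exact Matrix.PosDef.diagonal fun _ => pow_pos hσM 2)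
  -- continuity of the map p ↦ -((p.1⁻¹ * p.2) *ᵥ θ0) at (K, 0)
  have hinvK : ContinuousAt Inv.inv K := continuousAt_matrix_inv K (by
    rw [show (Ring.inverse : ℝ → ℝ) = Inv.inv from Ring.inverse_eq_inv']
    exact continuousAt_inv₀ hKpd.det_pos.ne')
  have hg : Continuous (fun q : Matrix (Fin L) (Fin L) ℝ × Matrix (Fin L) (Fin L) ℝ =>
      -((q.1 * q.2) *ᵥ θ0)) :=
    ((continuous_fst.matrix_mul continuous_snd).matrix_mulVec continuous_const).neg
  have hfT : Tendsto (fun p : Matrix (Fin L) (Fin L) ℝ × Matrix (Fin L) (Fin L) ℝ =>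
      -((p.1⁻¹ * p.2) *ᵥ θ0)) (nhds ((K, 0) : Matrix (Fin L) (Fin L) ℝ × Matrix (Fin L) (Fin L) ℝ))
      (nhds (0 : Fin L → ℝ)) := by
    have h1 : Tendsto (fun p : Matrix (Fin L) (Fin L) ℝ × Matrix (Fin L) (Fin L) ℝ =>
        ((p.1⁻¹, p.2) : Matrix (Fin L) (Fin L) ℝ × Matrix (Fin L) (Fin L) ℝ))
        (nhds ((K, 0) : Matrix (Fin L) (Fin L) ℝ × Matrix (Fin L) (Fin L) ℝ))
        (nhds ((K⁻¹, 0) : Matrix (Fin L) (Fin L) ℝ × Matrix (Fin L) (Fin L) ℝ)) :=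
      Tendsto.prodMk_nhds (hinvK.comp continuousAt_fst) continuousAt_snd
    have h2 := (hg.tendsto ((K⁻¹, 0) : Matrix (Fin L) (Fin L) ℝ × Matrix (Fin L) (Fin L) ℝ)).comp h1
    simpa [Function.comp_def] using h2
  have hV : (fun p : Matrix (Fin L) (Fin L) ℝ × Matrix (Fin L) (Fin L) ℝ =>
      -((p.1⁻¹ * p.2) *ᵥ θ0)) ⁻¹' Metric.ball (0 : Fin L → ℝ) ε ∈ nhds
      ((K, 0) : Matrix (Fin L) (Fin L) ℝ × Matrix (Fin L) (Fin L) ℝ) :=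
    hfT (Metric.ball_mem_nhds _ hε)
  rw [nhds_prod_eq] at hV
  obtain ⟨s, hs, t, ht, hst⟩ := Filter.mem_prod_iff.mp hV
  obtain ⟨δ₁, hδ₁, hsball⟩ := bima_entrywise_nhds K hs
  obtain ⟨δ₂, hδ₂, htball⟩ := bima_entrywise_nhds 0 ht
  -- entrywise convergence of (1/n) D n
  have hElim : ∀ l l' : Fin L, Tendsto (fun n : ℕ => (((n : ℝ)⁻¹) • D n) l l') atTop (nhds 0) := by
    intro l l'
    have hc : Continuous (fun X : Matrix (Fin L) (Fin L) ℝ => X l l') :=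
      continuous_id.matrix_elem l l'
    have := (hc.tendsto (0 : Matrix (Fin L) (Fin L) ℝ)).comp hDlim
    simpa [Function.comp_def] using this
  have hmin : (0 : ℝ) < min (δ₁ / 2) δ₂ := lt_min (by linarith) hδ₂
  have hev1 : ∀ᶠ n : ℕ in atTop, ∀ l l' : Fin L,
      |(((n : ℝ)⁻¹) • D n) l l'| < min (δ₁ / 2) δ₂ := by
    rw [eventually_all]
    intro l
    rw [eventually_all]
    intro l'
    have hm : ∀ᶠ x : ℝ in nhds 0, |x| < min (δ₁ / 2) δ₂ := by
      have := eventually_abs_sub_lt (0 : ℝ) hmin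
      simpa using this
    exact (hElim l l').eventually hm
  have hbound : Tendsto (fun n : ℕ => ∑ p : Fin L × Fin L,
      P {ω | δ₁ / 2 ≤ dist ((n : ℝ)⁻¹ * (((M n ω)ᵀ * M n ω) p.1 p.2)) (K p.1 p.2)})
      atTop (nhds (0 : ENNReal)) := by
    have h : ∀ p : Fin L × Fin L, Tendsto (fun n : ℕ =>
        P {ω | δ₁ / 2 ≤ dist ((n : ℝ)⁻¹ * (((M n ω)ᵀ * M n ω) p.1 p.2)) (K p.1 p.2)})
        atTop (nhds 0) := fun p => tendstoInMeasure_iff_dist.mp (hMM p.1 p.2) (δ₁ / 2) (half_pos hδ₁)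
    have hsum := tendsto_finset_sum (Finset.univ : Finset (Fin L × Fin L))
      (fun p (_ : p ∈ Finset.univ) => h p)
    simpa using hsum
  refine tendsto_of_tendsto_of_tendsto_of_le_of_le' tendsto_const_nhds hbound
    (Eventually.of_forall fun n => zero_le (a := _)) ?_
  filter_upwards [hev1, eventually_ge_atTop 1] with n hn hn1
  have hcn : ((n : ℝ))⁻¹ ≠ 0 := inv_ne_zero (Nat.cast_ne_zero.mpr (by omega))
  -- set inclusion
  have hsub : {ω | ε ≤ dist (((M n ω)ᵀ * M n ω + D n)⁻¹ *ᵥ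
        ((M n ω)ᵀ *ᵥ U n ω - D n *ᵥ θ0)) (0 : Fin L → ℝ)}
      ⊆ {ω | ¬ U n ω = 0} ∪ ⋃ p : Fin L × Fin L,
        {ω | δ₁ / 2 ≤ dist ((n : ℝ)⁻¹ * (((M n ω)ᵀ * M n ω) p.1 p.2)) (K p.1 p.2)} := by
    intro ω hω
    rw [Set.mem_union, Set.mem_iUnion]
    by_contra hco
    push_neg at hco
    obtain ⟨h1, h2⟩ := hco
    simp only [Set.mem_setOf_eq, not_not] at h1
    have h2' : ∀ p : Fin L × Fin L,
        dist ((n : ℝ)⁻¹ * (((M n ω)ᵀ * M n ω) p.1 p.2)) (K p.1 p.2) < δ₁ / 2 := by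
      intro p
      have := h2 p
      simp only [Set.mem_setOf_eq, not_le] at this
      exact this
    set X : Matrix (Fin L) (Fin L) ℝ := (M n ω)ᵀ * M n ω with hX
    have hBeq : ((X + D n)⁻¹ *ᵥ ((M n ω)ᵀ *ᵥ U n ω - D n *ᵥ θ0))
        = -(((((n : ℝ)⁻¹) • (X + D n))⁻¹ * (((n : ℝ)⁻¹) • D n)) *ᵥ θ0) := by
      rw [h1, Matrix.mulVec_zero]
      exact bima_eq θ0 X (D n) hcn
    have hA : ∀ l l' : Fin L, |(((n : ℝ)⁻¹) • (X + D n)) l l' - K l l'| < δ₁ := by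
      intro l l'
      have e1 : (((n : ℝ)⁻¹) • (X + D n)) l l'
          = (n : ℝ)⁻¹ * X l l' + (((n : ℝ)⁻¹) • D n) l l' := by
        simp [Matrix.add_apply, Matrix.smul_apply, mul_add, smul_eq_mul]
      have h3' : |(((n : ℝ)⁻¹) • D n) l l'| < δ₁ / 2 :=
        lt_of_lt_of_le (hn l l') (min_le_left _ _)
      have h4' : |(n : ℝ)⁻¹ * X l l' - K l l'| < δ₁ / 2 := by
        have := h2' (l, l')
        rwa [Real.dist_eq] at this
      rw [e1]
      calc |((n : ℝ)⁻¹ * X l l' + (((n : ℝ)⁻¹) • D n) l l') - K l l'|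
          ≤ |(n : ℝ)⁻¹ * X l l' - K l l'| + |(((n : ℝ)⁻¹) • D n) l l'| := by
            have heq : ((n : ℝ)⁻¹ * X l l' + (((n : ℝ)⁻¹) • D n) l l') - K l l'
                = ((n : ℝ)⁻¹ * X l l' - K l l') + (((n : ℝ)⁻¹) • D n) l l' := by ring
            rw [heq]
            exact abs_add_le _ _
        _ < δ₁ / 2 + δ₁ / 2 := add_lt_add h4' h3'
        _ = δ₁ := add_halves δ₁
    have hE : ∀ l l' : Fin L,
        |(((n : ℝ)⁻¹) • D n) l l' - (0 : Matrix (Fin L) (Fin L) ℝ) l l'| < δ₂ := by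
      intro l l'
      simpa using lt_of_lt_of_le (hn l l') (min_le_right _ _)
    have hfinal := hst (Set.mk_mem_prod (hsball _ hA) (htball _ hE))
    rw [Set.mem_preimage, Metric.mem_ball] at hfinal
    rw [Set.mem_setOf_eq, hBeq] at hω
    exact absurd hfinal (not_lt.mpr hω)
  calc P {ω | ε ≤ dist (((M n ω)ᵀ * M n ω + D n)⁻¹ *ᵥ
        ((M n ω)ᵀ *ᵥ U n ω - D n *ᵥ θ0)) (0 : Fin L → ℝ)}
      ≤ P ({ω | ¬ U n ω = 0} ∪ ⋃ p : Fin L × Fin L,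
        {ω | δ₁ / 2 ≤ dist ((n : ℝ)⁻¹ * (((M n ω)ᵀ * M n ω) p.1 p.2)) (K p.1 p.2)}) :=
        measure_mono hsub
    _ ≤ P {ω | ¬ U n ω = 0} + P (⋃ p : Fin L × Fin L,
        {ω | δ₁ / 2 ≤ dist ((n : ℝ)⁻¹ * (((M n ω)ᵀ * M n ω) p.1 p.2)) (K p.1 p.2)}) :=
        measure_union_le _ _
    _ ≤ 0 + ∑ p : Fin L × Fin L,
        P {ω | δ₁ / 2 ≤ dist ((n : ℝ)⁻¹ * (((M n ω)ᵀ * M n ω) p.1 p.2)) (K p.1 p.2)} := by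
        refine add_le_add (le_of_eq ?_) ?_
        · exact ae_iff.mp (hU n)
        · have := measure_iUnion_le (μ := P) (fun p : Fin L × Fin L =>
            {ω | δ₁ / 2 ≤ dist ((n : ℝ)⁻¹ * (((M n ω)ᵀ * M n ω) p.1 p.2)) (K p.1 p.2)})
          simpa [tsum_fintype] using this
    _ = ∑ p : Fin L × Fin L,
        P {ω | δ₁ / 2 ≤ dist ((n : ℝ)⁻¹ * (((M n ω)ᵀ * M n ω) p.1 p.2)) (K p.1 p.2)} :=
        zero_add _
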